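/- Given bipartite Euler system data over R satisfying hypotheses (DU), (LI), (RHO) and (LS), let (κ_n)_{n ∈ N^odd}, (λ_n)_{n ∈ N^even} be a free bipartite Euler system of odd type. Then λ_n ∈ Stub_n for every n ∈ N^even and κ_n ∈ Stub_n for every n ∈ N^odd; equivalently, m_n ≤ ind(λ_n, R) for every n ∈ N^even and m_n ≤ ind(κ_n, Sel(n)) for every n ∈ N^odd. -/

import Mathlib

/-- The length of a module: the Krull dimension of its lattice of submodules. -/
noncomputable def moduleLength (R M : Type*) [Ring R] [AddCommGroup M] [Module R M] : ℕ∞ :=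
  WithBot.unbotD 0 (Order.krullDim (Submodule R M))

/-- The `𝔪`-torsion submodule `S[𝔪]` of a module over a local ring. -/
noncomputable def mTorsion (R : Type*) [CommRing R] [IsLocalRing R]
    (S : Type*) [AddCommGroup S] [Module R S] : Submodule R S :=
  Submodule.torsionBySet R S ((IsLocalRing.maximalIdeal R : Ideal R) : Set R)

/-- The dimension of `S[𝔪]` as a vector space over the residue field `R/𝔪`. -/
noncomputable def mdim (R : Type*) [CommRing R] [IsLocalRing R]
    (S : Type*) [AddCommGroup S] [Module R S] : ℕ :=
  Module.finrank (R ⧸ IsLocalRing.maximalIdeal R)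
    (Submodule.torsionBySet R S ((IsLocalRing.maximalIdeal R : Ideal R) : Set R))

section Helpers

variable {R : Type*} [Ring R]

lemma krullDim_eq_moduleLength (M : Type*) [AddCommGroup M] [Module R M] :
    Order.krullDim (Submodule R M) = ((moduleLength R M : ℕ∞) : WithBot ℕ∞) := by
  have h0 : (0 : WithBot ℕ∞) ≤ Order.krullDim (Submodule R M) :=
    Order.krullDim_nonneg
  unfold moduleLength
  cases h : Order.krullDim (Submodule R M) with
  | bot => rw [h] at h0; simp at h0
  | coe a => rfl

lemma moduleLength_eq_of_equiv {M N : Type*} [AddCommGroup M] [Module R M]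
    [AddCommGroup N] [Module R N] (e : M ≃ₗ[R] N) :
    moduleLength R M = moduleLength R N := by
  unfold moduleLength
  rw [Order.krullDim_eq_of_orderIso (Submodule.orderIsoMapComap e)]

lemma moduleLength_eq_zero (M : Type*) [AddCommGroup M] [Module R M] [Subsingleton M] :
    moduleLength R M = 0 := by
  have : Unique (Submodule R M) := by
    refine ⟨⟨⊥⟩, fun p => ?_⟩
    ext x
    simp [Subsingleton.elim x 0]
  unfold moduleLength
  rw [Order.krullDim_eq_zero_of_unique]
  rfl

lemma chain_le_moduleLength {M : Type*} [AddCommGroup M] [Module R M] {j : ℕ}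
    (f : Fin (j + 1) → Submodule R M) (hf : StrictMono f) :
    (j : ℕ∞) ≤ moduleLength R M := by
  let p : LTSeries (Submodule R M) := ⟨j, f, fun i => hf (Fin.castSucc_lt_succ (i := i))⟩
  have := Order.LTSeries.length_le_krullDim p
  rw [krullDim_eq_moduleLength] at this
  exact_mod_cast this

lemma one_le_moduleLength (M : Type*) [AddCommGroup M] [Module R M] [Nontrivial M] :
    (1 : ℕ∞) ≤ moduleLength R M := by
  obtain ⟨x, hx⟩ := exists_ne (0 : M)
  have hbt : (⊥ : Submodule R M) < ⊤ := by
    refine lt_of_le_of_ne le_top (fun h => hx ?_)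
    have : x ∈ (⊥ : Submodule R M) := h ▸ Submodule.mem_top
    simpa using this
  have := chain_le_moduleLength (R := R) (M := M) (j := 1) ![⊥, ⊤] ?_
  · exact_mod_cast this
  · intro a b hab
    fin_cases a <;> fin_cases b <;> simp_all [Fin.lt_def]

lemma moduleLength_le_of_strictMono_fin {M : Type*} [AddCommGroup M] [Module R M] {s : ℕ}
    (φ : Submodule R M → Fin (s + 1)) (hφ : StrictMono φ) :
    moduleLength R M ≤ (s : ℕ∞) := by
  have h1 : Order.krullDim (Submodule R M) ≤ Order.krullDim (Fin (s + 1)) :=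
    Order.krullDim_le_of_strictMono φ hφ
  have h2 : Order.krullDim (Fin (s + 1)) ≤ ((s : ℕ∞) : WithBot ℕ∞) := by
    apply iSup_le
    intro p
    have hinj : Function.Injective p.toFun := p.strictMono.injective
    have hcard := Fintype.card_le_of_injective p.toFun hinj
    simp only [Fintype.card_fin] at hcard
    have : p.length ≤ s := by omega
    exact_mod_cast this
  rw [krullDim_eq_moduleLength] at h1
  exact_mod_cast h1.trans h2

end Helpers

section RingFacts

open IsLocalRing

variable {R : Type*} [CommRing R] [IsLocalRing R] [IsArtinianRing R]

lemma pow_stab {i : ℕ} (h : (maximalIdeal R) ^ i = (maximalIdeal R) ^ (i + 1)) :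
    (maximalIdeal R) ^ i = ⊥ := by
  obtain ⟨t, ht⟩ := IsArtinianRing.isNilpotent_jacobson_bot (R := R)
  rw [IsLocalRing.jacobson_eq_maximalIdeal ⊥ bot_ne_top] at ht
  have key : ∀ j, (maximalIdeal R) ^ (i + j) = (maximalIdeal R) ^ i := by
    intro j
    induction j with
    | zero => rfl
    | succ j ihj =>
      rw [← Nat.add_assoc, pow_succ, ihj, ← pow_succ, ← h]
  have := key t
  rw [pow_add, ht, mul_zero] at this
  rw [← this]
  rfl

variable (k : ℕ) (hk : moduleLength R R = (k : ℕ∞))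

include hk in
lemma pow_k_eq_bot : (maximalIdeal R) ^ k = ⊥ := by
  by_contra hne
  have hnebot : ∀ j ≤ k, (maximalIdeal R) ^ j ≠ ⊥ := by
    intro j hj hcon
    exact hne (le_bot_iff.mp (hcon ▸ Ideal.pow_le_pow_right hj))
  have hstrict : ∀ i j, i < j → j ≤ k → (maximalIdeal R) ^ j < (maximalIdeal R) ^ i := by
    intro i j hij hj
    refine lt_of_le_of_ne (Ideal.pow_le_pow_right (le_of_lt hij)) (fun he => ?_)
    have hstab : (maximalIdeal R) ^ i = (maximalIdeal R) ^ (i + 1) :=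
      le_antisymm
        (le_trans (le_of_eq he.symm) (Ideal.pow_le_pow_right hij))
        (Ideal.pow_le_pow_right (Nat.le_succ i))
    exact hnebot i (by omega) (pow_stab hstab)
  have hchain : ((k + 1 : ℕ) : ℕ∞) ≤ moduleLength R R := by
    apply chain_le_moduleLength (f := fun j : Fin (k + 2) =>
      if (j : ℕ) = 0 then ⊥ else (maximalIdeal R) ^ (k + 1 - (j : ℕ)))
    intro a b hab
    have hab' : (a : ℕ) < (b : ℕ) := hab
    have hbk : (b : ℕ) ≤ k + 1 := by omega
    have hb0 : ¬ (b : ℕ) = 0 := by omega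
    rcases Nat.eq_zero_or_pos (a : ℕ) with ha | ha
    · simp only [ha, if_pos rfl, if_neg hb0]
      exact bot_lt_iff_ne_bot.mpr (hnebot _ (by omega))
    · simp only [if_neg (by omega : ¬ (a:ℕ) = 0), if_neg hb0]
      exact hstrict _ _ (by omega) (by omega)
  rw [hk] at hchain
  exact absurd hchain (by exact_mod_cast by omega)

end RingFacts

section RingFacts2

open IsLocalRing

variable {R : Type*} [CommRing R] [IsLocalRing R] [IsArtinianRing R]

-- classification of ideals, relative to any s with 𝕞^s = ⊥
lemma ideal_classify (hprin : (maximalIdeal R).IsPrincipal) {s : ℕ}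
    (hs : (maximalIdeal R) ^ s = ⊥) (I : Ideal R) :
    ∃ i ≤ s, I = (maximalIdeal R) ^ i := by
  obtain ⟨π, hπ0⟩ := hprin
  have hπ : maximalIdeal R = Ideal.span {π} := hπ0
  rcases eq_or_ne I ⊥ with rfl | hIne
  · exact ⟨s, le_refl s, hs.symm⟩
  have hex : ∃ j, ¬ I ≤ (maximalIdeal R) ^ j := by
    refine ⟨s, fun hcon => hIne (le_bot_iff.mp (hs ▸ hcon))⟩
  classical
  set j₀ := Nat.find hex with hj₀
  have hj₀spec : ¬ I ≤ (maximalIdeal R) ^ j₀ := Nat.find_spec hex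
  have hj₀pos : 0 < j₀ := by
    rcases Nat.eq_zero_or_pos j₀ with h0 | h
    · exfalso; apply hj₀spec; rw [h0, pow_zero, Ideal.one_eq_top]; exact le_top
    · exact h
  have hj₀le : j₀ ≤ s := by
    by_contra hcon
    exact Nat.find_min hex (by omega : s < j₀) (fun hcc => hIne (le_bot_iff.mp (hs ▸ hcc)))
  set i := j₀ - 1 with hi
  have hIi : I ≤ (maximalIdeal R) ^ i := by
    by_contra hcon
    have hle : j₀ ≤ i := Nat.find_le hcon
    omega
  obtain ⟨x, hxI, hxnot⟩ : ∃ x ∈ I, x ∉ (maximalIdeal R) ^ (i + 1) := by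
    by_contra hcon
    push_neg at hcon
    exact hj₀spec (by
      intro y hy
      have := hcon y hy
      rwa [show i + 1 = j₀ by omega] at this)
  refine ⟨i, by omega, le_antisymm hIi ?_⟩
  -- x = u * π^i with u a unit, so π^i ∈ I
  have hxmem : x ∈ Ideal.span {π ^ i} := by
    rw [← Ideal.span_singleton_pow, ← hπ]
    exact hIi hxI
  obtain ⟨u, hu⟩ := Ideal.mem_span_singleton'.mp hxmem
  have hunit : IsUnit u := by
    by_contra hnu
    apply hxnot
    have humem : u ∈ maximalIdeal R := by
      rwa [IsLocalRing.mem_maximalIdeal]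
    rw [← hu, pow_succ']
    exact Ideal.mul_mem_mul humem (Ideal.pow_mem_pow (by rw [hπ]; exact Ideal.mem_span_singleton_self π) i)
  have hπi : π ^ i ∈ I := by
    obtain ⟨v, hv⟩ := hunit
    have : π ^ i = v.inv * x := by
      rw [← hu, ← hv, ← mul_assoc]
      simp [Units.inv_mul]
    rw [this]
    exact Ideal.mul_mem_left I _ hxI
  rw [hπ, Ideal.span_singleton_pow]
  exact (Ideal.span_singleton_le_iff_mem _).mpr hπi

end RingFacts2

section RingFacts3

open IsLocalRing

variable {R : Type*} [CommRing R] [IsLocalRing R] [IsArtinianRing R]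
variable (hprin : (maximalIdeal R).IsPrincipal) {k : ℕ} (hk : moduleLength R R = (k : ℕ∞))

include hprin hk in
lemma pow_ne_bot_of_lt {i : ℕ} (hi : i < k) : (maximalIdeal R) ^ i ≠ ⊥ := by
  intro hcon
  -- then every ideal is 𝕞^j with j ≤ i, so moduleLength R R ≤ i < k
  have hcl := ideal_classify hprin hcon
  classical
  have hφ : ∃ φ : Ideal R → Fin (i + 1), StrictMono φ := by
    refine ⟨fun I => ⟨i - Classical.choose (hcl I), by omega⟩, ?_⟩
    intro I J hIJ
    obtain ⟨hle₁, heq₁⟩ := Classical.choose_spec (hcl I)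
    obtain ⟨hle₂, heq₂⟩ := Classical.choose_spec (hcl J)
    set eI := Classical.choose (hcl I)
    set eJ := Classical.choose (hcl J)
    have : eJ < eI := by
      by_contra hcon2
      push_neg at hcon2
      have : J ≤ I := by
        rw [heq₁, heq₂]
        exact Ideal.pow_le_pow_right hcon2
      exact absurd hIJ (not_lt_of_ge this)
    simp only [Fin.mk_lt_mk]
    omega
  obtain ⟨φ, hφ⟩ := hφ
  have := moduleLength_le_of_strictMono_fin φ hφ
  rw [hk] at this
  exact absurd this (by exact_mod_cast by omega)

include hprin hk in
lemma pow_lt_pow_mI {i j : ℕ} (hij : i < j) (hj : j ≤ k) :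
    (maximalIdeal R) ^ j < (maximalIdeal R) ^ i := by
  refine lt_of_le_of_ne (Ideal.pow_le_pow_right (le_of_lt hij)) (fun he => ?_)
  have hstab : (maximalIdeal R) ^ i = (maximalIdeal R) ^ (i + 1) :=
    le_antisymm
      (le_trans (le_of_eq he.symm) (Ideal.pow_le_pow_right hij))
      (Ideal.pow_le_pow_right (Nat.le_succ i))
  exact pow_ne_bot_of_lt hprin hk (by omega : i < k) (pow_stab hstab)

include hprin hk in
lemma length_pow_ge {i : ℕ} (hi : i ≤ k) :
    ((k - i : ℕ) : ℕ∞) ≤ moduleLength R ((maximalIdeal R) ^ i : Ideal R) := by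
  -- chain ⊥ = 𝕞^k ≤ ... ≤ 𝕞^i inside 𝕞^i
  apply chain_le_moduleLength (f := fun j : Fin (k - i + 1) =>
    Submodule.comap ((maximalIdeal R) ^ i).subtype ((maximalIdeal R) ^ (k - (j : ℕ))))
  intro a b hab
  have hab' : (a : ℕ) < (b : ℕ) := hab
  have hak : (a : ℕ) ≤ k - i := by omega
  have hbk : (b : ℕ) ≤ k - i := by omega
  have hlt : (maximalIdeal R) ^ (k - (a : ℕ)) < (maximalIdeal R) ^ (k - (b : ℕ)) :=
    pow_lt_pow_mI hprin hk (by omega) (by omega)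
  have hmono : Submodule.comap ((maximalIdeal R) ^ i).subtype ((maximalIdeal R) ^ (k - (a : ℕ)))
      ≤ Submodule.comap ((maximalIdeal R) ^ i).subtype ((maximalIdeal R) ^ (k - (b : ℕ))) :=
    Submodule.comap_mono (le_of_lt hlt)
  refine lt_of_le_of_ne hmono (fun he => ?_)
  -- map back : map subtype (comap subtype p) = 𝕞^i ⊓ p = p  (p ≤ 𝕞^i)
  have hmapa := congrArg (Submodule.map ((maximalIdeal R) ^ i).subtype) he
  rw [Submodule.map_comap_subtype, Submodule.map_comap_subtype,
    inf_eq_right.mpr (Ideal.pow_le_pow_right (by omega : i ≤ k - (a:ℕ))),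
    inf_eq_right.mpr (Ideal.pow_le_pow_right (by omega : i ≤ k - (b:ℕ)))] at hmapa
  exact absurd hmapa (ne_of_lt hlt)

end RingFacts3

section BasisFacts

variable {R : Type*} [CommRing R] {H : Type*} [AddCommGroup H] [Module R H]

lemma basis_fin1_repr (b : Module.Basis (Fin 1) R H) (x : H) : x = (b.repr x 0) • b 0 := by
  conv_lhs => rw [← b.sum_repr x]
  simp

lemma basis_fin1_span (b : Module.Basis (Fin 1) R H) :
    (⊤ : Submodule R H) = Submodule.span R {b 0} := by
  have hd : (default : Fin 1) = 0 := Subsingleton.elim _ _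
  rw [← b.span_eq, Set.range_unique, hd]

lemma basis_fin1_smul_cancel (b : Module.Basis (Fin 1) R H) {u v : R} (h : u • b 0 = v • b 0) :
    u = v := by
  have := congrArg (fun y => b.repr y 0) h
  simpa using this

noncomputable def basis_fin1_equiv (b : Module.Basis (Fin 1) R H) : H ≃ₗ[R] R :=
  b.repr.trans (Finsupp.LinearEquiv.finsuppUnique R R (Fin 1))

lemma span_eq_span_of_quot_equiv (b : Module.Basis (Fin 1) R H) (μ c : R)
    (f : (R ⧸ Ideal.span {μ}) ≃ₗ[R] (H ⧸ Submodule.span R {c • b 0})) :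
    Ideal.span {μ} = Ideal.span {c} := by
  have hkillL : ∀ y : R ⧸ Ideal.span {μ}, μ • y = 0 := by
    intro y
    obtain ⟨z, rfl⟩ := Submodule.Quotient.mk_surjective _ y
    rw [← Submodule.Quotient.mk_smul, Submodule.Quotient.mk_eq_zero]
    exact Ideal.mem_span_singleton'.mpr ⟨z, by rw [smul_eq_mul, mul_comm]⟩
  have hkillR : ∀ w : H ⧸ Submodule.span R {c • b 0}, c • w = 0 := by
    intro w
    obtain ⟨z, rfl⟩ := Submodule.Quotient.mk_surjective _ w
    rw [← Submodule.Quotient.mk_smul, Submodule.Quotient.mk_eq_zero]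
    obtain ⟨u, hu⟩ : ∃ u : R, z = u • b 0 := ⟨b.repr z 0, basis_fin1_repr b z⟩
    rw [hu, smul_comm]
    exact Submodule.smul_mem _ u (Submodule.mem_span_singleton_self _)
  apply le_antisymm
  · rw [Ideal.span_singleton_le_iff_mem]
    have hz : μ • (Submodule.Quotient.mk (b 0) : H ⧸ Submodule.span R {c • b 0}) = 0 := by
      have h1 := hkillL (f.symm (Submodule.Quotient.mk (b 0)))
      have h2 := congrArg f h1
      rwa [map_smul, f.apply_symm_apply, map_zero f] at h2
    rw [← Submodule.Quotient.mk_smul, Submodule.Quotient.mk_eq_zero] at hz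
    obtain ⟨t, ht⟩ := Submodule.mem_span_singleton.mp hz
    have ht2 : (t * c) • b 0 = μ • b 0 := by rw [mul_smul]; exact ht
    have := basis_fin1_smul_cancel b ht2
    exact this ▸ Ideal.mem_span_singleton'.mpr ⟨t, rfl⟩
  · rw [Ideal.span_singleton_le_iff_mem]
    have hz : c • (Submodule.Quotient.mk 1 : R ⧸ Ideal.span {μ}) = 0 := by
      have h1 := hkillR (f (Submodule.Quotient.mk 1))
      have h2 := congrArg f.symm h1
      rwa [map_smul, f.symm_apply_apply, map_zero f.symm] at h2
    rw [← Submodule.Quotient.mk_smul, Submodule.Quotient.mk_eq_zero] at hz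
    simpa using hz

end BasisFacts
-- helper for ideals
section SmulTop
variable {R : Type*} [CommRing R]

lemma ideal_smul_top (I : Ideal R) : I • (⊤ : Submodule R R) = I := by
  rw [Ideal.smul_eq_mul, Ideal.mul_top]

end SmulTop


/-- Given bipartite Euler system data over `R` satisfying (DU), (LI), (RHO) and (LS),
a free bipartite Euler system of odd type satisfies `λ_n ∈ Stub_n` for `n ∈ N^even`
and `κ_n ∈ Stub_n` for `n ∈ N^odd`. -/
theorem euler_system_bound
    {R : Type*} [CommRing R] [IsLocalRing R] [IsArtinianRing R]
    (hprin : (IsLocalRing.maximalIdeal R).IsPrincipal)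
    (k : ℕ) (hk : moduleLength R R = (k : ℕ∞))
    {L : Type*} [Infinite L] [DecidableEq L]
    (even : Finset L → Prop)
    (hflip : ∀ (n : Finset L) (ℓ : L), ℓ ∉ n → (even (insert ℓ n) ↔ ¬ even n))
    (Sel : Finset L → Type*) [∀ n, AddCommGroup (Sel n)] [∀ n, Module R (Sel n)]
    (M : Finset L → Type*) [∀ n, AddCommGroup (M n)] [∀ n, Module R (M n)]
    (m : Finset L → ℕ) (hm : ∀ n, moduleLength R (M n) = (m n : ℕ∞))
    (isoEven : ∀ n, even n → Nonempty (Sel n ≃ₗ[R] M n × M n))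
    (isoOdd : ∀ n, ¬ even n → Nonempty (Sel n ≃ₗ[R] R × M n × M n))
    (Hunr Hord : L → Type*)
    [∀ ℓ, AddCommGroup (Hunr ℓ)] [∀ ℓ, Module R (Hunr ℓ)]
    [∀ ℓ, AddCommGroup (Hord ℓ)] [∀ ℓ, Module R (Hord ℓ)]
    (bUnr : ∀ ℓ, Nonempty (Module.Basis (Fin 1) R (Hunr ℓ)))
    (bOrd : ∀ ℓ, Nonempty (Module.Basis (Fin 1) R (Hord ℓ)))
    (locUnr : ∀ (n : Finset L) (ℓ : L), ℓ ∉ n → (Sel n →ₗ[R] Hunr ℓ))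
    (locOrd : ∀ (n : Finset L) (ℓ : L), ℓ ∉ n → (Sel (insert ℓ n) →ₗ[R] Hord ℓ))
    -- (DU)
    (hDU : ∀ (n : Finset L) (ℓ : L) (h : ℓ ∉ n),
      moduleLength R (LinearMap.range (locUnr n ℓ h)) +
        moduleLength R (LinearMap.range (locOrd n ℓ h)) = (k : ℕ∞))
    -- (LI)
    (hLI : ∀ (n : Finset L) (ℓ : L) (h : ℓ ∉ n),
      (even n → (m n : ℕ∞) =
        (m (insert ℓ n) : ℕ∞) + moduleLength R (LinearMap.range (locUnr n ℓ h))) ∧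
      (¬ even n → (m (insert ℓ n) : ℕ∞) =
        (m n : ℕ∞) + moduleLength R (LinearMap.range (locOrd n ℓ h))))
    -- (RHO)
    (hRHO : ∀ (n : Finset L) (ℓ : L) (h : ℓ ∉ n),
      ((∀ x ∈ mTorsion R (Sel n), locUnr n ℓ h x = 0) →
        mdim R (Sel (insert ℓ n)) = mdim R (Sel n) + 1) ∧
      ((¬ ∀ x ∈ mTorsion R (Sel n), locUnr n ℓ h x = 0) →
        mdim R (Sel (insert ℓ n)) + 1 = mdim R (Sel n)))
    -- (LS)
    (hLS : ∀ (n : Finset L) (C : Submodule R (Sel n)), C ≠ ⊥ →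
      (∃ x : Sel n, C = Submodule.span R {x}) →
      ∃ (ℓ : L) (h : ℓ ∉ n), ∀ x ∈ C, locUnr n ℓ h x = 0 → x = 0)
    -- a bipartite Euler system of odd type
    (κ : ∀ n : Finset L, ¬ even n → Sel n)
    (lam : ∀ n : Finset L, even n → R)
    (hrec1 : ∀ (n : Finset L) (hn : even n) (ℓ : L) (h : ℓ ∉ n)
        (ho : ¬ even (insert ℓ n)),
      Nonempty ((R ⧸ Ideal.span {lam n hn}) ≃ₗ[R]
        (Hord ℓ ⧸ Submodule.span R {locOrd n ℓ h (κ (insert ℓ n) ho)})))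
    (hrec2 : ∀ (n : Finset L) (hn : ¬ even n) (ℓ : L) (h : ℓ ∉ n)
        (he : even (insert ℓ n)),
      Nonempty ((R ⧸ Ideal.span {lam (insert ℓ n) he}) ≃ₗ[R]
        (Hunr ℓ ⧸ Submodule.span R {locUnr n ℓ h (κ n hn)})))
    -- freeness
    (hfree : ∀ (n : Finset L) (hn : ¬ even n), ∃ C : Submodule R (Sel n),
      κ n hn ∈ C ∧ Nonempty (Module.Basis (Fin 1) R C)) :
    (∀ (n : Finset L) (hn : even n),
      lam n hn ∈ (IsLocalRing.maximalIdeal R) ^ (m n)) ∧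
    (∀ (n : Finset L) (hn : ¬ even n),
      κ n hn ∈ (IsLocalRing.maximalIdeal R) ^ (m n) • (⊤ : Submodule R (Sel n))) := by
  classical
  have hbot : (IsLocalRing.maximalIdeal R) ^ k = ⊥ := pow_k_eq_bot k hk
  have hkpos : 1 ≤ k := by
    have h1 := one_le_moduleLength (R := R) R
    rw [hk] at h1
    exact_mod_cast h1
  have main : ∀ t : ℕ,
      (∀ n (hn : even n), m n ≤ t → lam n hn ∈ (IsLocalRing.maximalIdeal R) ^ (m n)) ∧
      (∀ n (hn : ¬ even n), m n ≤ t →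
        κ n hn ∈ (IsLocalRing.maximalIdeal R) ^ (m n) • (⊤ : Submodule R (Sel n))) := by
    intro t
    induction t using Nat.strong_induction_on with
    | _ t ih =>
    have hEven : ∀ n (hn : even n), m n ≤ t →
        lam n hn ∈ (IsLocalRing.maximalIdeal R) ^ (m n) := by
      intro n hn hle
      rcases Nat.eq_zero_or_pos (m n) with h0 | hpos
      · rw [h0, pow_zero, Ideal.one_eq_top]; exact Submodule.mem_top
      -- Sel n is nontrivial
      have hnontriv : ∃ x : Sel n, x ≠ 0 := by
        by_contra hno
        push_neg at hno
        haveI hsub : Subsingleton (Sel n) := ⟨fun a b => by rw [hno a, hno b]⟩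
        obtain ⟨e⟩ := isoEven n hn
        haveI : Subsingleton (M n × M n) := Equiv.subsingleton e.symm.toEquiv
        haveI : Subsingleton (M n) :=
          ⟨fun a b => congrArg Prod.fst (Subsingleton.elim (a, (0 : M n)) (b, 0))⟩
        have h0 := moduleLength_eq_zero (R := R) (M n)
        rw [hm n] at h0
        have : m n = 0 := by exact_mod_cast h0
        omega
      obtain ⟨x, hx⟩ := hnontriv
      have hCne : Submodule.span R {x} ≠ ⊥ := by
        simpa [Submodule.span_singleton_eq_bot] using hx
      obtain ⟨ℓ, h, hinj⟩ := hLS n (Submodule.span R {x}) hCne ⟨x, rfl⟩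
      have ho : ¬ even (insert ℓ n) := fun hcon => (hflip n ℓ h).mp hcon hn
      haveI hrangene : Nontrivial (LinearMap.range (locUnr n ℓ h)) := by
        refine ⟨⟨⟨locUnr n ℓ h x, ⟨x, rfl⟩⟩, 0, fun hcon => ?_⟩⟩
        exact hx (hinj x (Submodule.mem_span_singleton_self x)
          (by simpa using congrArg Subtype.val hcon))
      have ha1 : (1 : ℕ∞) ≤ moduleLength R (LinearMap.range (locUnr n ℓ h)) :=
        one_le_moduleLength _
      have hLIe := (hLI n ℓ h).1 hn
      have hAne : moduleLength R (LinearMap.range (locUnr n ℓ h)) ≠ ⊤ := by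
        intro hcon
        rw [hcon, add_top] at hLIe
        exact (ENat.coe_ne_top (m n)) hLIe
      obtain ⟨aN, haN0⟩ := WithTop.ne_top_iff_exists.mp hAne
      have haN : (aN : ℕ∞) = moduleLength R (LinearMap.range (locUnr n ℓ h)) := haN0
      have haN1 : 1 ≤ aN := by
        rw [← haN] at ha1; exact_mod_cast ha1
      have hnat : m n = m (insert ℓ n) + aN := by
        rw [← haN] at hLIe; exact_mod_cast hLIe
      have hm'lt : m (insert ℓ n) < m n := by omega
      have hκ' := (ih (m (insert ℓ n)) (lt_of_lt_of_le hm'lt hle)).2 (insert ℓ n) ho le_rfl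
      -- range of locOrd is contained in 𝕞^aN • ⊤
      set gO := basis_fin1_equiv (bOrd ℓ).some with hgO
      have hDUe := hDU n ℓ h
      have hBne : moduleLength R (LinearMap.range (locOrd n ℓ h)) ≠ ⊤ := by
        intro hcon
        rw [hcon, add_top] at hDUe
        exact (ENat.coe_ne_top k) hDUe.symm
      obtain ⟨bN, hbN0⟩ := WithTop.ne_top_iff_exists.mp hBne
      have hbN : (bN : ℕ∞) = moduleLength R (LinearMap.range (locOrd n ℓ h)) := hbN0
      have hab : aN + bN = k := by
        rw [← haN, ← hbN] at hDUe; exact_mod_cast hDUe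
      obtain ⟨i, hik, hIeq⟩ := ideal_classify hprin hbot
        (Submodule.map (gO : Hord ℓ →ₗ[R] R) (LinearMap.range (locOrd n ℓ h)))
      have hlen2 := moduleLength_eq_of_equiv (R := R)
        (gO.submoduleMap (LinearMap.range (locOrd n ℓ h)))
      have hilen := length_pow_ge hprin hk hik
      rw [← hIeq, ← hlen2, ← hbN] at hilen
      have hkib : (k - i) ≤ bN := by exact_mod_cast hilen
      have hai : aN ≤ i := by omega
      have hNle : LinearMap.range (locOrd n ℓ h) ≤
          (IsLocalRing.maximalIdeal R) ^ aN • (⊤ : Submodule R (Hord ℓ)) := by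
        intro z hz
        have hgz : gO z ∈ Submodule.map (gO : Hord ℓ →ₗ[R] R) (LinearMap.range (locOrd n ℓ h)) :=
          Submodule.mem_map_of_mem hz
        rw [hIeq] at hgz
        have hgz2 : gO z ∈ (IsLocalRing.maximalIdeal R) ^ aN • (⊤ : Submodule R R) := by
          rw [ideal_smul_top]
          exact Ideal.pow_le_pow_right hai hgz
        have hmem := Submodule.mem_map_of_mem (f := (gO.symm : R →ₗ[R] Hord ℓ)) hgz2
        rw [Submodule.map_smul'', Submodule.map_top, LinearEquiv.range] at hmem
        have hzz : gO.symm (gO z) = z := gO.symm_apply_apply z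
        simp only [LinearEquiv.coe_coe] at hmem
        rwa [hzz] at hmem
      have hlocmem : locOrd n ℓ h (κ (insert ℓ n) ho) ∈
          (IsLocalRing.maximalIdeal R) ^ (m n) • (⊤ : Submodule R (Hord ℓ)) := by
        have h1 : locOrd n ℓ h (κ (insert ℓ n) ho) ∈
            Submodule.map (locOrd n ℓ h)
              ((IsLocalRing.maximalIdeal R) ^ (m (insert ℓ n)) • ⊤) :=
          Submodule.mem_map_of_mem hκ'
        rw [Submodule.map_smul'', Submodule.map_top] at h1
        have h3 := smul_mono_right ((IsLocalRing.maximalIdeal R) ^ (m (insert ℓ n))) hNle h1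
        rwa [← Submodule.smul_assoc, Ideal.smul_eq_mul, ← pow_add, ← hnat] at h3
      rw [basis_fin1_span (bOrd ℓ).some] at hlocmem
      obtain ⟨c, hc, hce⟩ := Submodule.mem_smul_span_singleton.mp hlocmem
      obtain ⟨f⟩ := hrec1 n hn ℓ h ho
      rw [← hce] at f
      have hspan := span_eq_span_of_quot_equiv (bOrd ℓ).some (lam n hn) c f
      have hmemc : lam n hn ∈ Ideal.span {c} :=
        hspan ▸ Ideal.mem_span_singleton_self _
      exact (Ideal.span_singleton_le_iff_mem _).mpr hc hmemc
    refine ⟨hEven, ?_⟩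
    intro n hn hle
    obtain ⟨C, hκC, ⟨bC⟩⟩ := hfree n hn
    have hdC : (bC 0 : Sel n) ∈ C := (bC 0).2
    have hdne : (bC 0 : Sel n) ≠ 0 := by
      intro hcon
      exact bC.ne_zero 0 (Subtype.ext hcon)
    have hCspan : C = Submodule.span R {(bC 0 : Sel n)} := by
      apply le_antisymm
      · intro c hc
        have h1 : (⟨c, hc⟩ : C) = (bC.repr ⟨c, hc⟩ 0) • bC 0 := basis_fin1_repr bC _
        have hcv := congrArg Subtype.val h1
        simp only [Submodule.coe_smul] at hcv
        rw [hcv]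
        exact Submodule.smul_mem _ _ (Submodule.mem_span_singleton_self _)
      · rw [Submodule.span_singleton_le_iff_mem]
        exact hdC
    have hCne : C ≠ ⊥ := by
      intro hcon
      exact hdne ((Submodule.eq_bot_iff C).mp hcon _ hdC)
    obtain ⟨ℓ, h, hinj⟩ := hLS n C hCne ⟨(bC 0 : Sel n), hCspan⟩
    have he : even (insert ℓ n) := (hflip n ℓ h).mpr hn
    have hc₀e : locUnr n ℓ h (bC 0 : Sel n) =
        ((bUnr ℓ).some.repr (locUnr n ℓ h (bC 0 : Sel n)) 0) • (bUnr ℓ).some 0 :=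
      basis_fin1_repr (bUnr ℓ).some _
    set c₀ := (bUnr ℓ).some.repr (locUnr n ℓ h (bC 0 : Sel n)) 0 with hc₀def
    have hc₀u : IsUnit c₀ := by
      by_contra hnu
      obtain ⟨π, hπ0⟩ := id hprin
      have hπ : IsLocalRing.maximalIdeal R = Ideal.span {π} := hπ0
      have hc₀m : c₀ ∈ IsLocalRing.maximalIdeal R :=
        (IsLocalRing.mem_maximalIdeal c₀).mpr (mem_nonunits_iff.mpr hnu)
      obtain ⟨tt, htt⟩ := Ideal.mem_span_singleton'.mp (hπ ▸ hc₀m)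
      have hπk : π ^ k = 0 := by
        have hp : π ^ k ∈ (IsLocalRing.maximalIdeal R) ^ k :=
          Ideal.pow_mem_pow (hπ ▸ Ideal.mem_span_singleton_self π) k
        rw [hbot] at hp
        simpa using hp
      have hx0 : locUnr n ℓ h (π ^ (k - 1) • (bC 0 : Sel n)) = 0 := by
        rw [map_smul, hc₀e, smul_smul, ← htt]
        have hre : π ^ (k - 1) * (tt * π) = tt * (π ^ (k - 1) * π) := by ring
        rw [hre, ← pow_succ, (by omega : k - 1 + 1 = k), hπk, mul_zero, zero_smul]
      have hx00 := hinj _ (Submodule.smul_mem _ _ hdC) hx0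
      have hsm : π ^ (k - 1) • (bC 0) = (0 : C) := Subtype.ext (by simpa using hx00)
      have hπ0' : π ^ (k - 1) = 0 := by
        have := congrArg (fun y => bC.repr y 0) hsm
        simpa using this
      apply pow_ne_bot_of_lt hprin hk (by omega : k - 1 < k)
      rw [hπ, Ideal.span_singleton_pow, hπ0']
      exact Ideal.span_singleton_eq_bot.mpr rfl
    have htop : LinearMap.range (locUnr n ℓ h) = ⊤ := by
      rw [eq_top_iff, basis_fin1_span (bUnr ℓ).some, Submodule.span_singleton_le_iff_mem]
      have heq : (bUnr ℓ).some 0 = locUnr n ℓ h ((↑hc₀u.unit⁻¹ : R) • (bC 0 : Sel n)) := by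
        rw [map_smul, hc₀e, smul_smul]
        rw [hc₀u.val_inv_mul, one_smul]
      rw [heq]
      exact LinearMap.mem_range_self _ _
    have haK : moduleLength R (LinearMap.range (locUnr n ℓ h)) = (k : ℕ∞) := by
      rw [htop, moduleLength_eq_of_equiv (Submodule.topEquiv),
        moduleLength_eq_of_equiv (basis_fin1_equiv (bUnr ℓ).some)]
      exact hk
    have hDUo := hDU n ℓ h
    rw [haK] at hDUo
    have hB0 : moduleLength R (LinearMap.range (locOrd n ℓ h)) = 0 :=
      WithTop.add_left_cancel (ENat.coe_ne_top k) (hDUo.trans (add_zero _).symm)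
    have hLIo := (hLI n ℓ h).2 hn
    rw [hB0, add_zero] at hLIo
    have hmins : m (insert ℓ n) = m n := by exact_mod_cast hLIo
    have hlam' := hEven (insert ℓ n) he (by rw [hmins]; exact hle)
    rw [hmins] at hlam'
    set r := bC.repr ⟨κ n hn, hκC⟩ 0 with hrdef
    have hκr : κ n hn = r • (bC 0 : Sel n) := by
      have h1 := basis_fin1_repr bC ⟨κ n hn, hκC⟩
      have h2 := congrArg Subtype.val h1
      simpa using h2
    have hlocκ : locUnr n ℓ h (κ n hn) =
        (r * c₀) • (bUnr ℓ).some 0 := by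
      rw [hκr, map_smul, hc₀e, smul_smul]
    obtain ⟨f⟩ := hrec2 n hn ℓ h he
    rw [hlocκ] at f
    have hspan := span_eq_span_of_quot_equiv (bUnr ℓ).some (lam (insert ℓ n) he)
      (r * c₀) f
    have hrc : r * c₀ ∈ (IsLocalRing.maximalIdeal R) ^ (m n) := by
      have h1 : r * c₀ ∈ Ideal.span {lam (insert ℓ n) he} :=
        hspan ▸ Ideal.mem_span_singleton_self _
      exact (Ideal.span_singleton_le_iff_mem _).mpr hlam' h1
    have hrmem : r ∈ (IsLocalRing.maximalIdeal R) ^ (m n) := by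
      have h1 : r = (↑hc₀u.unit⁻¹ : R) * (r * c₀) := by
        rw [mul_comm r c₀, ← mul_assoc]
        rw [hc₀u.val_inv_mul, one_mul]
      rw [h1]
      exact Ideal.mul_mem_left _ _ hrc
    rw [hκr]
    exact Submodule.smul_mem_smul hrmem Submodule.mem_top
  exact ⟨fun n hn => (main (m n)).1 n hn le_rfl, fun n hn => (main (m n)).2 n hn le_rfl⟩
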